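/- Let (a₁,…,a_{2k+1}) be a list of complex numbers with a_{2i−1}+a_{2i} ∈ ℤ_{≥0} for i = 1,…,k and with the ♯′-condition holding, and let (b₁,…,b_{2k+2}) be a re-indexing of the list (a₁,…,a_{2k+1}, 0) such that b_{2i−1} + b_{2i} ∈ ℤ_{≥0} for i = 1,…,k+1. Then a_{2k+1} ∈ ℤ_{≥0}. -/

import Mathlib

open PowerSeries Polynomial

noncomputable section

abbrev PS := PowerSeries ℂ

/-- `f ∈ 1 + u⁻¹ℂ[[u⁻¹]]`, with `X` playing the role of `u⁻¹`. -/
def One1 (f : PS) : Prop := PowerSeries.constantCoeff f = 1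

/-- `f ∈ 1 + u⁻²ℂ[[u⁻²]]`: an even power series with constant term 1. -/
def EvenOne (f : PS) : Prop := One1 f ∧ ∀ n, Odd n → PowerSeries.coeff n f = 0

/-- `u^{-deg P}·P(u)` viewed as a power series in `X = u⁻¹`. -/
def lowerP (P : Polynomial ℂ) : PS := (P.reverse : PowerSeries ℂ)

/-- `f → g`: there is a monic `P` with `f/g = P(u+1)/P(u)`. -/
def Arrow (f g : PS) : Prop :=
  ∃ P : Polynomial ℂ, P.Monic ∧ f * lowerP P = g * lowerP (P.comp (Polynomial.X + 1))

/-- `f ⇒ g`: there is a monic `P` of even degree with `P(u) = P(1−u)` and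
`f/g = P(u+1)/P(u)`. -/
def DArrow (f g : PS) : Prop :=
  ∃ P : Polynomial ℂ, P.Monic ∧ Even P.natDegree ∧ P.comp (1 - Polynomial.X) = P ∧
    f * lowerP P = g * lowerP (P.comp (Polynomial.X + 1))

/-- `f(−u)`, i.e. `u⁻¹ ↦ −u⁻¹`. -/
def negU (f : PS) : PS := PowerSeries.rescale (-1) f

/-- the factor `1 + a·u⁻¹`. -/
def linF (a : ℂ) : PS := 1 + PowerSeries.C a * PowerSeries.X

/-- `f` is a polynomial in `u⁻¹`. -/
def IsPolyPS (f : PS) : Prop := ∃ Q : Polynomial ℂ, (Q : PS) = f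

/-- `z ∈ ℤ_{≥0}` (so `a ≥ b` iff `IsNonnegInt (a - b)`). -/
def IsNonnegInt (z : ℂ) : Prop := ∃ n : ℕ, z = n
/-- The ♯′-condition on the list `a 0, …, a (2k)` (0-indexed): for each `i < k`,
whenever `{a p + a q : 2i ≤ p < q ≤ 2k} ∩ ℤ_{≥0}` is non-empty, `a (2i) + a (2i+1)`
is its minimal element for the order `x ≥ y ↔ x - y ∈ ℤ_{≥0}`. -/
def SharpCond (k : ℕ) (a : ℕ → ℂ) : Prop :=
  ∀ i < k,
    (∃ p q, 2*i ≤ p ∧ p < q ∧ q ≤ 2*k ∧ IsNonnegInt (a p + a q)) →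
      IsNonnegInt (a (2*i) + a (2*i+1)) ∧
      ∀ p q, 2*i ≤ p → p < q → q ≤ 2*k → IsNonnegInt (a p + a q) →
        IsNonnegInt (a p + a q - (a (2*i) + a (2*i+1)))

/-- `b` is a re-indexing (permutation) of the first `m` entries of `a`. -/
def PermOf (m : ℕ) (b a : ℕ → ℂ) : Prop :=
  ∃ σ : Equiv.Perm (Fin m), ∀ i : Fin m, b i = a (σ i)

/-- `x` is a ♯′-special element of the list `a 0, …, a (2k)`. -/
def IsSharpSpecial' (k : ℕ) (a : ℕ → ℂ) (x : ℂ) : Prop :=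
  ∃ b : ℕ → ℂ, PermOf (2*k+1) b a ∧ SharpCond k b ∧ b (2*k) = x


/-! ### Auxiliary lemmas for `augment_zero_special_bound` -/

lemma IsNonnegInt.add' {x y : ℂ} (hx : IsNonnegInt x) (hy : IsNonnegInt y) :
    IsNonnegInt (x + y) := by
  obtain ⟨m, rfl⟩ := hx; obtain ⟨n, rfl⟩ := hy
  exact ⟨m + n, by push_cast; ring⟩

def flipN (m : ℕ) : ℕ := if m % 2 = 0 then m + 1 else m - 1

lemma flipN_lt {M : ℕ} (hM : M % 2 = 0) {m : ℕ} (hm : m < M) : flipN m < M := by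
  unfold flipN; split_ifs <;> omega

lemma flipN_flipN (m : ℕ) : flipN (flipN m) = m := by
  unfold flipN; split_ifs <;> omega

lemma flipN_ne (m : ℕ) : flipN m ≠ m := by
  unfold flipN; split_ifs <;> omega

def tauOf (k : ℕ) (σ : Equiv.Perm (Fin (2*k+2))) (n : ℕ) : ℕ :=
  if h : n < 2*k+2 then
    ((σ ⟨flipN ((σ.symm ⟨n, h⟩ : Fin (2*k+2)) : ℕ),
        flipN_lt (by omega) (Fin.is_lt _)⟩ : Fin (2*k+2)) : ℕ)
  else n

def GoodInv (k : ℕ) (a : ℕ → ℂ) (τ : ℕ → ℕ) : Prop :=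
  ∀ n, n ≤ 2*k+1 → τ n ≤ 2*k+1 ∧ τ (τ n) = n ∧ τ n ≠ n ∧
    IsNonnegInt ((if n = 2*k+1 then 0 else a n) + (if τ n = 2*k+1 then 0 else a (τ n)))

lemma tauOf_goodInv (k : ℕ) (a b : ℕ → ℂ) (σ : Equiv.Perm (Fin (2*k+2)))
    (hσ : ∀ i : Fin (2*k+2), b i = if (σ i : ℕ) = 2*k+1 then (0:ℂ) else a (σ i))
    (hpb : ∀ i < k+1, IsNonnegInt (b (2*i) + b (2*i+1))) :
    GoodInv k a (tauOf k σ) := by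
  have hstep : ∀ (j : ℕ) (hj : j < 2*k+2), tauOf k σ j =
      ((σ ⟨flipN ((σ.symm ⟨j, hj⟩ : Fin (2*k+2)) : ℕ),
        flipN_lt (by omega) (Fin.is_lt _)⟩ : Fin (2*k+2)) : ℕ) := by
    intro j hj; simp only [tauOf]; rw [dif_pos hj]
  have key : ∀ (z : Fin (2*k+2)) (h : ((σ z : Fin (2*k+2)) : ℕ) < 2*k+2),
      σ.symm ⟨((σ z : Fin (2*k+2)) : ℕ), h⟩ = z := by
    intro z h; rw [Fin.eta]; exact σ.symm_apply_apply z
  intro n hn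
  have hlt : n < 2*k+2 := by omega
  set m : Fin (2*k+2) := σ.symm ⟨n, hlt⟩ with hmdef
  set w : Fin (2*k+2) := ⟨flipN (m : ℕ), flipN_lt (by omega) (Fin.is_lt _)⟩ with hwdef
  have hm : σ m = ⟨n, hlt⟩ := σ.apply_symm_apply _
  have hmv : ((σ m : Fin (2*k+2)) : ℕ) = n := by rw [hm]
  have hτn : tauOf k σ n = ((σ w : Fin (2*k+2)) : ℕ) := by
    rw [hstep n hlt, hwdef, hmdef]
  have e3 : σ ⟨flipN ((w : Fin (2*k+2)) : ℕ), flipN_lt (by omega) (Fin.is_lt _)⟩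
      = (⟨n, hlt⟩ : Fin (2*k+2)) := by
    rw [show (⟨flipN ((w : Fin (2*k+2)) : ℕ), flipN_lt (by omega) (Fin.is_lt _)⟩
        : Fin (2*k+2)) = m from Fin.ext (flipN_flipN _)]
    exact hm
  have hinv : tauOf k σ (tauOf k σ n) = n := by
    rw [hτn, hstep _ (σ w).is_lt, key w]
    exact congrArg Fin.val e3
  have hne : tauOf k σ n ≠ n := by
    rw [hτn]
    intro hEq
    have h5 : σ w = σ m := Fin.ext (by rw [hEq, hmv])
    exact flipN_ne (m : ℕ) (congrArg Fin.val (σ.injective h5))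
  have hsum : IsNonnegInt (b (m : ℕ) + b (flipN (m : ℕ))) := by
    rcases Nat.even_or_odd (m : ℕ) with ⟨i, hiq⟩ | ⟨i, hiq⟩
    · have hfl : flipN (m : ℕ) = (m : ℕ) + 1 := by
        unfold flipN; rw [if_pos (by omega)]
      have hhpb := hpb i (by have := m.is_lt; omega)
      have e5 : 2*i+1 = flipN (m : ℕ) := by omega
      rw [e5] at hhpb
      have e4 : 2*i = (m : ℕ) := by omega
      rw [e4] at hhpb
      exact hhpb
    · have hfl : flipN (m : ℕ) = (m : ℕ) - 1 := by
        unfold flipN; rw [if_neg (by omega)]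
      have hhpb := hpb i (by have := m.is_lt; omega)
      have e5 : 2*i+1 = (m : ℕ) := by omega
      rw [e5] at hhpb
      have e4 : 2*i = flipN (m : ℕ) := by omega
      rw [e4] at hhpb
      rw [add_comm] at hhpb
      exact hhpb
  refine ⟨by rw [hτn]; have := (σ w).is_lt; omega, hinv, hne, ?_⟩
  have e1 : (if n = 2*k+1 then (0:ℂ) else a n) = b (m : ℕ) := by
    rw [hσ m, hmv]
  have e2 : (if tauOf k σ n = 2*k+1 then (0:ℂ) else a (tauOf k σ n)) = b (flipN (m : ℕ)) := by
    rw [hτn]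
    exact (hσ w).symm
  rw [e1, e2]
  exact hsum

lemma keyL (k : ℕ) : ∀ (a : ℕ → ℂ),
    (∀ i < k, IsNonnegInt (a (2*i) + a (2*i+1))) → SharpCond k a →
    ∀ τ : ℕ → ℕ, GoodInv k a τ → IsNonnegInt (a (2*k)) := by
  induction k with
  | zero =>
    intro a _ _ τ hτ
    obtain ⟨h1, _, h3, h4⟩ := hτ 0 (by omega)
    have ht : τ 0 = 1 := by omega
    rw [if_neg (by omega : ¬ (0 = 2*0+1)), if_pos (by omega : τ 0 = 2*0+1)] at h4
    simpa using h4
  | succ k IH =>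
    intro a hpa hcond τ hτ
    suffices hs : ∃ τ', GoodInv (k+1) a τ' ∧ τ' 0 = 1 ∧ τ' 1 = 0 by
      obtain ⟨τ', hτ', ht0, ht1⟩ := hs
      set a' : ℕ → ℂ := fun n => a (n + 2) with ha'
      have hge2 : ∀ n, 2 ≤ n → n ≤ 2*(k+1)+1 → 2 ≤ τ' n := by
        intro n h2 hn
        obtain ⟨hb, hi, hne, _⟩ := hτ' n hn
        have e0 : τ' n ≠ 0 := by intro h; rw [h, ht0] at hi; omega
        have e1 : τ' n ≠ 1 := by intro h; rw [h, ht1] at hi; omega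
        omega
      have hpa' : ∀ i < k, IsNonnegInt (a' (2*i) + a' (2*i+1)) := by
        intro i hi
        have h := hpa (i+1) (by omega)
        have e1 : 2*(i+1) = 2*i + 2 := by ring
        rw [e1] at h
        rw [show 2*i+2+1 = 2*i+1+2 from by ring] at h
        exact h
      have hcond' : SharpCond k a' := by
        rintro i hi ⟨p, q, hp, hpq, hq, hnn⟩
        have h2 := hcond (i+1) (by omega)
          ⟨p+2, q+2, by omega, by omega, by omega, hnn⟩
        have e1 : 2*(i+1) = 2*i + 2 := by ring
        rw [e1] at h2
        rw [show 2*i+2+1 = 2*i+1+2 from by ring] at h2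
        refine ⟨h2.1, ?_⟩
        intro p' q' hp' hpq' hq' hnn'
        exact h2.2 (p'+2) (q'+2) (by omega) (by omega) (by omega) hnn'
      have hgood : GoodInv k a' (fun n => τ' (n+2) - 2) := by
        intro n hn
        obtain ⟨hb, hi, hne, hsum⟩ := hτ' (n+2) (by omega)
        have h2 : 2 ≤ τ' (n+2) := hge2 (n+2) (by omega) (by omega)
        have e2 : τ' (n+2) - 2 + 2 = τ' (n+2) := by omega
        refine ⟨?_, ?_, ?_, ?_⟩
        · show τ' (n+2) - 2 ≤ 2*k+1; omega
        · show τ' ((τ' (n+2) - 2) + 2) - 2 = n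
          rw [e2, hi]
          omega
        · show τ' (n+2) - 2 ≠ n; omega
        · show IsNonnegInt ((if n = 2*k+1 then 0 else a' n) +
            (if τ' (n+2) - 2 = 2*k+1 then 0 else a' (τ' (n+2) - 2)))
          have keyeq : ((if n = 2*k+1 then (0:ℂ) else a' n) +
              (if τ' (n+2) - 2 = 2*k+1 then 0 else a' (τ' (n+2) - 2))) =
              ((if n+2 = 2*(k+1)+1 then 0 else a (n+2)) +
              (if τ' (n+2) = 2*(k+1)+1 then 0 else a (τ' (n+2)))) := by
            congr 1
            · by_cases h : n = 2*k+1
              · rw [if_pos h, if_pos (by omega)]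
              · rw [if_neg h, if_neg (by omega)]
            · by_cases h : τ' (n+2) - 2 = 2*k+1
              · rw [if_pos h, if_pos (by omega)]
              · rw [if_neg h, if_neg (by omega)]
                show a (τ' (n+2) - 2 + 2) = _
                rw [e2]
          rw [keyeq]
          exact hsum
      have hfin := IH a' hpa' hcond' _ hgood
      have efin : a' (2*k) = a (2*(k+1)) := by
        show a (2*k+2) = a (2*(k+1))
        congr 1 <;> ring
      rwa [efin] at hfin
    -- construct the re-pairing sending 0 ↔ 1
    obtain ⟨hx_le, hxinv, hxne, hxsum⟩ := hτ 0 (by omega)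
    obtain ⟨hy_le, hyinv, hyne, hysum⟩ := hτ 1 (by omega)
    rw [if_neg (by omega : ¬ ((0:ℕ) = 2*(k+1)+1))] at hxsum
    rw [if_neg (by omega : ¬ ((1:ℕ) = 2*(k+1)+1))] at hysum
    have h01 : IsNonnegInt (a 0 + a 1) := by
      have h := hpa 0 (by omega); simp only [mul_zero, zero_add] at h; exact h
    by_cases hx1 : τ 0 = 1
    · refine ⟨τ, hτ, hx1, ?_⟩
      rw [hx1] at hxinv
      exact hxinv
    set x := τ 0 with hxdef
    set y := τ 1 with hydef
    have hy0 : y ≠ 0 := by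
      intro h; rw [h] at hyinv; exact hx1 (hxdef.trans hyinv)
    have hxy : x ≠ y := by
      intro h; rw [h, hyinv] at hxinv; omega
    have hx2 : 2 ≤ x := by omega
    have hy2 : 2 ≤ y := by omega
    have hxy_sum : IsNonnegInt ((if x = 2*(k+1)+1 then 0 else a x) +
        (if y = 2*(k+1)+1 then 0 else a y)) := by
      by_cases hxN : x = 2*(k+1)+1
      · have hyN : y ≠ 2*(k+1)+1 := by omega
        rw [if_pos hxN] at hxsum
        rw [if_neg hyN] at hysum
        have ha0 : IsNonnegInt (a 0) := by simpa using hxsum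
        have hmin := (hcond 0 (by omega)
          ⟨1, y, by omega, by omega, by omega, hysum⟩).2 1 y (by omega) (by omega)
          (by omega) hysum
        simp only [mul_zero, zero_add] at hmin
        have hfin := hmin.add' ha0
        rw [show a 1 + a y - (a 0 + a 1) + a 0 = a y from by ring] at hfin
        rw [if_pos hxN, if_neg hyN]
        simpa using hfin
      · rw [if_neg hxN] at hxsum
        have hmin := (hcond 0 (by omega)
          ⟨0, x, by omega, by omega, by omega, hxsum⟩).2 0 x (by omega) (by omega)
          (by omega) hxsum
        simp only [mul_zero, zero_add] at hmin
        by_cases hyN : y = 2*(k+1)+1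
        · rw [if_pos hyN] at hysum
          have ha1 : IsNonnegInt (a 1) := by simpa using hysum
          have hfin := hmin.add' ha1
          rw [show a 0 + a x - (a 0 + a 1) + a 1 = a x from by ring] at hfin
          rw [if_neg hxN, if_pos hyN]
          simpa using hfin
        · rw [if_neg hyN] at hysum
          have hfin := hmin.add' hysum
          rw [show a 0 + a x - (a 0 + a 1) + (a 1 + a y) = a x + a y from by ring] at hfin
          rw [if_neg hxN, if_neg hyN]
          exact hfin
    set τ'' : ℕ → ℕ := fun n => if n = 0 then 1 else if n = 1 then 0 else
      if n = x then y else if n = y then x else τ n with hτ''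
    have val : ∀ n, τ'' n = if n = 0 then 1 else if n = 1 then 0 else
        if n = x then y else if n = y then x else τ n := fun n => rfl
    have v0 : τ'' 0 = 1 := by rw [val]; split_ifs <;> first | rfl | omega | exact absurd (by omega) ‹_› | exact (‹False›).elim
    have v1 : τ'' 1 = 0 := by rw [val]; split_ifs <;> first | rfl | omega | exact absurd (by omega) ‹_› | exact (‹False›).elim
    have vx : τ'' x = y := by rw [val]; split_ifs <;> first | rfl | omega | exact absurd (by omega) ‹_› | exact (‹False›).elim
    have vy : τ'' y = x := by rw [val]; split_ifs <;> first | rfl | omega | exact absurd (by omega) ‹_› | exact (‹False›).elim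
    have vgen : ∀ n, n ≠ 0 → n ≠ 1 → n ≠ x → n ≠ y → τ'' n = τ n := by
      intro n h0 h1 h2 h3; rw [val]; split_ifs <;> first | rfl | omega | exact absurd (by omega) ‹_› | exact (‹False›).elim
    refine ⟨τ'', ?_, v0, v1⟩
    intro n hn
    obtain ⟨hb, hi, hne, hsum⟩ := hτ n hn
    by_cases hn0 : n = 0
    · subst hn0
      rw [v0, v1]
      refine ⟨by omega, rfl, by omega, ?_⟩
      rw [if_neg (by omega : ¬ ((0:ℕ) = 2*(k+1)+1)),
        if_neg (by omega : ¬ ((1:ℕ) = 2*(k+1)+1))]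
      exact h01
    by_cases hn1 : n = 1
    · subst hn1
      rw [v1, v0]
      refine ⟨by omega, rfl, by omega, ?_⟩
      rw [if_neg (by omega : ¬ ((1:ℕ) = 2*(k+1)+1)),
        if_neg (by omega : ¬ ((0:ℕ) = 2*(k+1)+1))]
      rw [add_comm]; exact h01
    by_cases hnx : n = x
    · subst hnx
      rw [vx, vy]
      exact ⟨hy_le, rfl, Ne.symm hxy, hxy_sum⟩
    by_cases hny : n = y
    · subst hny
      rw [vy, vx]
      refine ⟨hx_le, rfl, hxy, ?_⟩
      rw [add_comm]; exact hxy_sum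
    · have ht0' : τ n ≠ 0 := by
        intro h; rw [h] at hi; exact hnx (hxdef.trans hi).symm
      have ht1' : τ n ≠ 1 := by
        intro h; rw [h] at hi; exact hny (hydef.trans hi).symm
      have htx' : τ n ≠ x := by
        intro h; rw [h, hxinv] at hi; exact hn0 hi.symm
      have hty' : τ n ≠ y := by
        intro h; rw [h, hyinv] at hi; exact hn1 hi.symm
      rw [vgen n hn0 hn1 hnx hny, vgen (τ n) ht0' ht1' htx' hty']
      exact ⟨hb, hi, hne, hsum⟩

/-- If the list (a₁,…,a_{2k+1},0) admits a re-indexing with nonnegative pair sums,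
then a_{2k+1} ∈ ℤ_{≥0}. -/
theorem augment_zero_special_bound (k : ℕ) (a b : ℕ → ℂ)
    (hpa : ∀ i < k, IsNonnegInt (a (2*i) + a (2*i+1)))
    (hcond : SharpCond k a)
    (hperm : PermOf (2*k+2) b (fun n => if n = 2*k+1 then (0 : ℂ) else a n))
    (hpb : ∀ i < k+1, IsNonnegInt (b (2*i) + b (2*i+1))) :
    IsNonnegInt (a (2*k)) := by
  obtain ⟨σ, hσ⟩ := hperm
  have hσ' : ∀ i : Fin (2*k+2), b i = if (σ i : ℕ) = 2*k+1 then (0:ℂ) else a (σ i) :=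
    fun i => hσ i
  exact keyL k a hpa hcond (tauOf k σ) (tauOf_goodInv k a b σ hσ' hpb)
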